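/- In U(W_{≥-1}), for every n ≥ 1, Ω^{2n+1}_{2n+1,-1} = -Ω^{2n+1}_{2n,0} = (1/2) Ω^{2n+2}_{2n+1,-1}. -/

import Mathlib

noncomputable section

/-- Index set `{i : ℤ | i ≥ -1}` of the basis `e_i` of the one-sided Witt algebra. -/
abbrev WIdx : Type := {i : ℤ // -1 ≤ i}

/-- The defining relations `e_i e_j = e_j e_i + (j - i) e_{i+j}` of the universal
enveloping algebra of the one-sided Witt algebra `W_{≥ -1}`. -/
inductive wittRel (k : Type) [Field k] :
    FreeAlgebra k WIdx → FreeAlgebra k WIdx → Prop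
  | rel (i j : WIdx) (h : -1 ≤ i.1 + j.1) :
      wittRel k (FreeAlgebra.ι k i * FreeAlgebra.ι k j)
        (FreeAlgebra.ι k j * FreeAlgebra.ι k i +
          (j.1 - i.1) • FreeAlgebra.ι k (⟨i.1 + j.1, h⟩ : WIdx))

/-- The universal enveloping algebra `U(W_{≥ -1})`, presented by generators `e_i` (`i ≥ -1`)
and the relations `[e_i, e_j] = (j - i) e_{i+j}`. -/
abbrev UW (k : Type) [Field k] := RingQuot (wittRel k)

/-- The generator `e_i` of `U(W_{≥ -1})` (junk value `0` for `i < -1`). -/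
def eW (k : Type) [Field k] (i : ℤ) : UW k :=
  if h : -1 ≤ i then RingQuot.mkAlgHom k (wittRel k) (FreeAlgebra.ι k ⟨i, h⟩) else 0

/-- The differentiators: `Ω^0_{k,s} = e_k e_s`, `Ω^{m+1}_{k,s} = Ω^m_{k,s} - Ω^m_{k-1,s+1}`. -/
def Ω (k : Type) [Field k] : ℕ → ℤ → ℤ → UW k
  | 0, a, s => eW k a * eW k s
  | m + 1, a, s => Ω k m a s - Ω k m (a - 1) (s + 1)

open Finset

variable {K : Type} [Field K]

lemma eW_comm (i j : ℤ) (hi : -1 ≤ i) (hj : -1 ≤ j) (hij : -1 ≤ i + j) :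
    eW K i * eW K j = eW K j * eW K i + (j - i) • eW K (i + j) := by
  rw [eW, eW, eW, dif_pos hi, dif_pos hj, dif_pos hij, ← map_mul, ← map_mul,
    RingQuot.mkAlgHom_rel K (wittRel.rel ⟨i, hi⟩ ⟨j, hj⟩ hij)]
  simp [map_add, map_zsmul]

lemma omega_sum (m : ℕ) : ∀ a s : ℤ,
    Ω K m a s = ∑ i ∈ Finset.range (m + 1),
      ((-1 : ℤ) ^ i * (m.choose i)) • (eW K (a - i) * eW K (s + i)) := by
  induction m with
  | zero => intro a s; simp [Ω]
  | succ m ih =>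
    intro a s
    have hsplit : ∑ i ∈ Finset.range (m + 2),
        ((-1 : ℤ) ^ i * ((m + 1).choose i)) • (eW K (a - i) * eW K (s + i))
        = (∑ i ∈ Finset.range (m + 2),
            ((-1 : ℤ) ^ i * (m.choose i)) • (eW K (a - i) * eW K (s + i)))
          + ∑ j ∈ Finset.range (m + 1),
            ((-1 : ℤ) ^ (j + 1) * (m.choose j)) • (eW K (a - (j + 1)) * eW K (s + (j + 1))) := by
      rw [Finset.sum_range_succ' _ (m + 1),
        Finset.sum_range_succ'
          (fun i => ((-1 : ℤ) ^ i * (m.choose i)) • (eW K (a - i) * eW K (s + i))) (m + 1),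
        add_right_comm, ← Finset.sum_add_distrib]
      congr 1
      · apply Finset.sum_congr rfl
        intro j _
        push_cast [Nat.choose_succ_succ]
        erw [← add_smul]
        congr 1
        ring
      · simp
    have htop : ∑ i ∈ Finset.range (m + 2),
        ((-1 : ℤ) ^ i * (m.choose i)) • (eW K (a - i) * eW K (s + i))
        = ∑ i ∈ Finset.range (m + 1),
        ((-1 : ℤ) ^ i * (m.choose i)) • (eW K (a - i) * eW K (s + i)) := by
      rw [Finset.sum_range_succ, Nat.choose_succ_self]
      simp
    have hsecond : ∑ j ∈ Finset.range (m + 1),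
        ((-1 : ℤ) ^ (j + 1) * (m.choose j)) • (eW K (a - (j + 1)) * eW K (s + (j + 1)))
        = - ∑ j ∈ Finset.range (m + 1),
        ((-1 : ℤ) ^ j * (m.choose j)) • (eW K (a - 1 - j) * eW K (s + 1 + j)) := by
      rw [← Finset.sum_neg_distrib]
      apply Finset.sum_congr rfl
      intro j _
      rw [← neg_smul]
      have e1 : a - ((j : ℤ) + 1) = a - 1 - j := by ring
      have e2 : s + ((j : ℤ) + 1) = s + 1 + j := by ring
      rw [e1, e2]
      congr 1
      ring
    show Ω K m a s - Ω K m (a - 1) (s + 1) = _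
    rw [hsplit, htop, hsecond, ih a s, ih (a - 1) (s + 1), sub_eq_add_neg]

lemma alt_lin (m : ℕ) (hm : 2 ≤ m) :
    ∑ j ∈ Finset.range (m + 1), ((-1 : ℤ) ^ j * (m.choose j)) * j = 0 := by
  obtain ⟨p, rfl⟩ : ∃ p, m = p + 1 := ⟨m - 1, by omega⟩
  rw [Finset.sum_range_succ']
  have key : ∀ i ∈ Finset.range (p + 1),
      ((-1 : ℤ) ^ (i + 1) * ((p + 1).choose (i + 1))) * ((i : ℤ) + 1)
      = (-(p + 1 : ℤ)) * ((-1 : ℤ) ^ i * (p.choose i)) := by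
    intro i _
    have h2 : (((p + 1).choose (i + 1) : ℤ)) * ((i : ℤ) + 1) = ((p + 1 : ℤ)) * (p.choose i) := by
      exact_mod_cast (Nat.add_one_mul_choose_eq p i).symm
    linear_combination ((-1 : ℤ) ^ (i + 1)) * h2
  push_cast
  rw [Finset.sum_congr rfl key, ← Finset.mul_sum,
    Int.alternating_sum_range_choose_of_ne (by omega : p ≠ 0)]
  ring

lemma alt_total (m : ℕ) (hm : 2 ≤ m) (c : ℤ) :
    ∑ j ∈ Finset.range (m + 1), ((-1 : ℤ) ^ j * (m.choose j)) * (c + 2 * j) = 0 := by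
  have h1 := Int.alternating_sum_range_choose_of_ne (show m ≠ 0 by omega)
  have h2 := alt_lin m hm
  calc ∑ j ∈ Finset.range (m + 1), ((-1 : ℤ) ^ j * (m.choose j)) * (c + 2 * j)
      = c * (∑ j ∈ Finset.range (m + 1), ((-1 : ℤ) ^ j * (m.choose j)))
        + 2 * ∑ j ∈ Finset.range (m + 1), ((-1 : ℤ) ^ j * (m.choose j)) * j := by
        rw [Finset.mul_sum, Finset.mul_sum, ← Finset.sum_add_distrib]
        apply Finset.sum_congr rfl
        intro j _
        ring
    _ = 0 := by rw [h1, h2]; ring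

lemma omega_reflect (m : ℕ) (hm : 2 ≤ m) (a s : ℤ) (hs : -1 ≤ s) (ha : (m : ℤ) - 1 ≤ a)
    (has : -1 ≤ a + s) :
    Ω K m a s = ((-1 : ℤ) ^ m) • Ω K m (s + m) (a - m) := by
  erw [omega_sum, omega_sum, Finset.smul_sum,
    ← Finset.sum_range_reflect (fun i => ((-1 : ℤ) ^ m) •
      (((-1 : ℤ) ^ i * (m.choose i)) • (eW K (s + m - i) * eW K (a - m + i)))) (m + 1)]
  simp only [Nat.add_sub_cancel]
  have key : ∀ j ∈ Finset.range (m + 1),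
      ((-1 : ℤ) ^ j * (m.choose j)) • (eW K (a - j) * eW K (s + j))
      = ((-1 : ℤ) ^ m) • (((-1 : ℤ) ^ (m - j) * (m.choose (m - j))) •
          (eW K (s + m - ((m - j : ℕ) : ℤ)) * eW K (a - m + ((m - j : ℕ) : ℤ))))
        + (((-1 : ℤ) ^ j * (m.choose j)) * ((s - a) + 2 * j)) • eW K (a + s) := by
    intro j hj
    have hjm : j ≤ m := by simpa [Nat.lt_succ_iff] using hj
    have hc1 : ((m - j : ℕ) : ℤ) = (m : ℤ) - j := Nat.cast_sub hjm
    have hcs : m.choose (m - j) = m.choose j := Nat.choose_symm hjm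
    have harg1 : s + (m : ℤ) - ((m - j : ℕ) : ℤ) = s + j := by rw [hc1]; ring
    have harg2 : a - (m : ℤ) + ((m - j : ℕ) : ℤ) = a - j := by rw [hc1]; ring
    have hpow : (-1 : ℤ) ^ m = (-1) ^ (m - j) * (-1) ^ j := by
      rw [← pow_add]; congr 1; omega
    have h1 : (-1 : ℤ) ^ (m - j) * (-1) ^ (m - j) = 1 := by
      rw [← pow_add]; exact Even.neg_one_pow ⟨m - j, rfl⟩
    have hsc : (-1 : ℤ) ^ m * ((-1 : ℤ) ^ (m - j) * (m.choose j : ℤ))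
        = (-1 : ℤ) ^ j * (m.choose j : ℤ) := by
      rw [hpow]; linear_combination ((-1 : ℤ) ^ j * (m.choose j : ℤ)) * h1
    erw [harg1, harg2, hcs, smul_smul, hsc,
      eW_comm (a - j) (s + j) (by omega) (by omega) (by omega), smul_add, smul_smul,
      show a - (j : ℤ) + (s + j) = a + s from by ring]
    congr 1
    congr 1
    ring
  erw [Finset.sum_congr rfl key, Finset.sum_add_distrib, ← Finset.sum_smul,
    alt_total m hm (s - a), zero_smul, add_zero]

/-- In `U(W_{≥-1})`, for `n ≥ 1`:
`Ω^{2n+1}_{2n+1,-1} = -Ω^{2n+1}_{2n,0} = (1/2) Ω^{2n+2}_{2n+1,-1}`. -/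
theorem omega_odd_relations (k : Type) [Field k] [CharZero k] (n : ℕ) (hn : 1 ≤ n) :
    Ω k (2 * n + 1) (2 * n + 1) (-1) = - Ω k (2 * n + 1) (2 * n) 0 ∧
    Ω k (2 * n + 1) (2 * n + 1) (-1) = (2 : k)⁻¹ • Ω k (2 * n + 2) (2 * n + 1) (-1) := by
  have hrefl := omega_reflect (K := k) (2 * n + 1) (by omega) (2 * n) 0 (by norm_num)
    (by push_cast; omega) (by omega)
  have e1 : (0 : ℤ) + ((2 * n + 1 : ℕ) : ℤ) = 2 * (n : ℤ) + 1 := by push_cast; ring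
  have e2 : (2 * (n : ℤ)) - ((2 * n + 1 : ℕ) : ℤ) = -1 := by push_cast; ring
  rw [e1, e2] at hrefl
  have hpow : ((-1 : ℤ) ^ (2 * n + 1)) = -1 := by
    rw [pow_succ, pow_mul]
    norm_num
  rw [hpow, neg_one_zsmul] at hrefl
  have part1 : Ω k (2 * n + 1) (2 * n + 1) (-1) = - Ω k (2 * n + 1) (2 * n) 0 := by
    rw [hrefl, neg_neg]
  refine ⟨part1, ?_⟩
  have hdef : Ω k (2 * n + 2) (2 * n + 1) (-1)
      = Ω k (2 * n + 1) (2 * n + 1) (-1) - Ω k (2 * n + 1) (2 * n + 1 - 1) (-1 + 1) := rfl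
  have e3 : (2 * (n : ℤ) + 1 - 1) = 2 * n := by ring
  have e4 : (-1 : ℤ) + 1 = 0 := by ring
  rw [e3, e4] at hdef
  have h2 : Ω k (2 * n + 2) (2 * n + 1) (-1) = (2 : k) • Ω k (2 * n + 1) (2 * n + 1) (-1) := by
    rw [hdef, part1, two_smul]
    abel
  rw [h2, smul_smul, inv_mul_cancel₀ (two_ne_zero), one_smul]
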